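/- Let B be a difference-closed submonoid of ℕ₀ⁿ (i.e. B = ℤB ∩ ℕ₀ⁿ where ℤB is the subgroup of ℤⁿ generated by B). If the quotient group ℤⁿ/ℤB is torsion-free, then B is contained in the subgroup of ℤⁿ generated by { m ∈ B : |supp(m)| ≤ 1 + 2s }, where s is the rank of ℤⁿ/ℤB. -/

import Mathlib

open Finset
namespace DCproof



variable {n s : ℕ}

/-- The generating set: nonnegative kernel elements of small support. -/
def Gset (n s : ℕ) (ψ : (Fin n → ℤ) →ₗ[ℤ] (Fin s → ℤ)) : Set (Fin n → ℤ) :=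
  {u | (∀ i, 0 ≤ u i) ∧ ψ u = 0 ∧ (Finset.univ.filter (fun i => u i ≠ 0)).card ≤ 1 + 2 * s}

/-- The lattice of kernel elements supported inside S. -/
def Lsub (ψ : (Fin n → ℤ) →ₗ[ℤ] (Fin s → ℤ)) (S : Finset (Fin n)) :
    Submodule ℤ (Fin n → ℤ) where
  carrier := {v | ψ v = 0 ∧ ∀ j ∉ S, v j = 0}
  add_mem' := by
    rintro a b ⟨ha1, ha2⟩ ⟨hb1, hb2⟩
    refine ⟨by rw [map_add, ha1, hb1, add_zero], fun j hj => ?_⟩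
    simp [ha2 j hj, hb2 j hj]
  zero_mem' := ⟨map_zero ψ, fun j _ => rfl⟩
  smul_mem' := by
    rintro c a ⟨h1, h2⟩
    refine ⟨by rw [map_smul, h1, smul_zero], fun j hj => ?_⟩
    simp [h2 j hj]

lemma mem_Lsub {ψ : (Fin n → ℤ) →ₗ[ℤ] (Fin s → ℤ)} {S : Finset (Fin n)} {v : Fin n → ℤ} :
    v ∈ Lsub ψ S ↔ ψ v = 0 ∧ ∀ j ∉ S, v j = 0 := Iff.rfl

/-- ratio function -/
def fQ (w c : Fin n → ℤ) (j : Fin n) : ℚ := (c j : ℚ) / (w j : ℚ)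

/-- argmax set of the ratio function over S -/
def Amax (S : Finset (Fin n)) (w c : Fin n → ℤ) : Finset (Fin n) :=
  S.filter (fun j => ∀ i ∈ S, fQ w c i ≤ fQ w c j)

lemma mem_Amax {S : Finset (Fin n)} {w c : Fin n → ℤ} {j : Fin n} :
    j ∈ Amax S w c ↔ j ∈ S ∧ ∀ i ∈ S, fQ w c i ≤ fQ w c j := by
  simp [Amax]

lemma Amax_subset {S : Finset (Fin n)} {w c : Fin n → ℤ} : Amax S w c ⊆ S :=
  Finset.filter_subset _ _

lemma Amax_nonempty {S : Finset (Fin n)} (hS : S.Nonempty) (w c : Fin n → ℤ) :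
    (Amax S w c).Nonempty := by
  obtain ⟨j, hj, hmax⟩ := Finset.exists_max_image S (fQ w c) hS
  exact ⟨j, mem_Amax.mpr ⟨hj, hmax⟩⟩

section W

variable {S : Finset (Fin n)} {w : Fin n → ℤ}

/-- positivity context: `w` is strictly positive exactly on `S` -/
def WPos (S : Finset (Fin n)) (w : Fin n → ℤ) : Prop :=
  (∀ i ∈ S, 0 < w i) ∧ (∀ i ∉ S, w i = 0)

lemma fQ_le_iff (hw : WPos S w) {c : Fin n → ℤ} {i j : Fin n} (hi : i ∈ S) (hj : j ∈ S) :
    fQ w c i ≤ fQ w c j ↔ c i * w j ≤ c j * w i := by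
  have hwi : (0 : ℚ) < (w i : ℚ) := by exact_mod_cast hw.1 i hi
  have hwj : (0 : ℚ) < (w j : ℚ) := by exact_mod_cast hw.1 j hj
  rw [fQ, fQ, div_le_div_iff₀ hwi hwj]
  exact_mod_cast Iff.rfl

lemma fQ_eq_iff (hw : WPos S w) {c : Fin n → ℤ} {i j : Fin n} (hi : i ∈ S) (hj : j ∈ S) :
    fQ w c i = fQ w c j ↔ c i * w j = c j * w i := by
  constructor
  · intro h
    have h1 := (fQ_le_iff hw hi hj).mp h.le
    have h2 := (fQ_le_iff hw hj hi).mp h.ge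
    omega
  · intro h
    have h1 := (fQ_le_iff hw hi hj).mpr h.le
    have h2 := (fQ_le_iff hw hj hi).mpr h.ge
    exact le_antisymm h1 h2

/-- rational proportionality to w -/
def PropW (w c : Fin n → ℤ) : Prop := ∃ q : ℚ, ∀ i, (c i : ℚ) = q * (w i : ℚ)

lemma amax_eq_S_iff (hw : WPos S w) (hS : S.Nonempty) {c : Fin n → ℤ}
    (hc : ∀ j ∉ S, c j = 0) : Amax S w c = S ↔ PropW w c := by
  constructor
  · intro h
    obtain ⟨j0, hj0⟩ := hS
    refine ⟨fQ w c j0, fun i => ?_⟩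
    by_cases hi : i ∈ S
    · have h1 : i ∈ Amax S w c := h.symm ▸ hi
      have h2 : j0 ∈ Amax S w c := h.symm ▸ hj0
      have e1 := (mem_Amax.mp h1).2 j0 hj0
      have e2 := (mem_Amax.mp h2).2 i hi
      have he : fQ w c i = fQ w c j0 := le_antisymm e2 e1
      have hwi : (w i : ℚ) ≠ 0 := by
        have := hw.1 i hi; exact_mod_cast this.ne'
      rw [← he, fQ, div_mul_cancel₀]
      exact hwi
    · rw [hc i hi, hw.2 i hi]
      simp
  · rintro ⟨q, hq⟩
    have hconst : ∀ i ∈ S, fQ w c i = q := by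
      intro i hi
      have hwi : (w i : ℚ) ≠ 0 := by
        have := hw.1 i hi; exact_mod_cast this.ne'
      rw [fQ, hq i, mul_div_assoc, div_self hwi, mul_one]
    apply Finset.Subset.antisymm Amax_subset
    intro j hj
    refine mem_Amax.mpr ⟨hj, fun i hi => ?_⟩
    rw [hconst i hi, hconst j hj]

end W

variable {n s : ℕ}

section W
variable {S : Finset (Fin n)} {w : Fin n → ℤ}

lemma fQ_lin (hw : WPos S w) (M : ℕ) (c u : Fin n → ℤ) {j : Fin n} (hj : j ∈ S) :
    fQ w ((M : ℤ) • c + u) j = (M : ℚ) * fQ w c j + fQ w u j := by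
  have : ((M : ℤ) • c + u) j = (M : ℤ) * c j + u j := rfl
  rw [fQ, this, fQ, fQ]
  push_cast
  ring

set_option maxHeartbeats 2000000 in
lemma amax_perturb (hw : WPos S w) (c u : Fin n → ℤ) :
    ∃ M : ℕ, 0 < M ∧ Amax S w ((M : ℤ) • c + u) =
      (Amax S w c).filter (fun j => ∀ i ∈ Amax S w c, fQ w u i ≤ fQ w u j) := by
  classical
  set P : Finset (Fin n × Fin n) :=
    (S ×ˢ S).filter (fun q => fQ w c q.1 < fQ w c q.2) with hP
  set M : ℕ := (P.sup (fun q => ⌈(fQ w u q.1 - fQ w u q.2) / (fQ w c q.2 - fQ w c q.1)⌉₊)) + 1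
    with hM
  have key : ∀ i j : Fin n, i ∈ S → j ∈ S → fQ w c i < fQ w c j →
      fQ w u i - fQ w u j < (M : ℚ) * (fQ w c j - fQ w c i) := by
    intro i j hi hj hlt
    have hmem : (i, j) ∈ P := by
      rw [hP]; simp [Finset.mem_filter, Finset.mem_product, hi, hj, hlt]
    have h1 : ⌈(fQ w u i - fQ w u j) / (fQ w c j - fQ w c i)⌉₊ ≤ M - 1 := by
      have h0 : ⌈(fQ w u i - fQ w u j) / (fQ w c j - fQ w c i)⌉₊ ≤
          P.sup (fun q => ⌈(fQ w u q.1 - fQ w u q.2) / (fQ w c q.2 - fQ w c q.1)⌉₊) :=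
        Finset.le_sup (f := fun q : Fin n × Fin n =>
          ⌈(fQ w u q.1 - fQ w u q.2) / (fQ w c q.2 - fQ w c q.1)⌉₊) hmem
      omega
    have h2 : (fQ w u i - fQ w u j) / (fQ w c j - fQ w c i) < (M : ℚ) := by
      calc (fQ w u i - fQ w u j) / (fQ w c j - fQ w c i)
          ≤ (⌈(fQ w u i - fQ w u j) / (fQ w c j - fQ w c i)⌉₊ : ℚ) := Nat.le_ceil _
        _ ≤ ((M - 1 : ℕ) : ℚ) := by exact_mod_cast h1
        _ < (M : ℚ) := by
            have : (0:ℕ) < M := by omega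
            exact_mod_cast Nat.sub_lt this Nat.one_pos
    have hpos : (0 : ℚ) < fQ w c j - fQ w c i := by linarith
    calc fQ w u i - fQ w u j
        = ((fQ w u i - fQ w u j) / (fQ w c j - fQ w c i)) * (fQ w c j - fQ w c i) := by
          field_simp
      _ < (M : ℚ) * (fQ w c j - fQ w c i) := by
          exact mul_lt_mul_of_pos_right h2 hpos
  refine ⟨M, Nat.succ_pos _, ?_⟩
  ext j
  simp only [Finset.mem_filter]
  constructor
  · intro hj
    have hjS : j ∈ S := Amax_subset hj
    have hjmax := (mem_Amax.mp hj).2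
    have hjAc : j ∈ Amax S w c := by
      refine mem_Amax.mpr ⟨hjS, fun i hi => ?_⟩
      by_contra hcon
      push_neg at hcon
      have hk := key j i hjS hi hcon
      have e1 := fQ_lin hw M c u (j := j) hjS
      have e2 := fQ_lin hw M c u (j := i) hi
      have := hjmax i hi
      rw [e1, e2] at this
      linarith
    refine ⟨hjAc, fun i hi => ?_⟩
    have hiS : i ∈ S := Amax_subset hi
    have heq : fQ w c i = fQ w c j :=
      le_antisymm ((mem_Amax.mp hjAc).2 i hiS) ((mem_Amax.mp hi).2 j hjS)
    have := hjmax i hiS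
    rw [fQ_lin hw M c u hiS, fQ_lin hw M c u hjS, heq] at this
    linarith
  · rintro ⟨hjAc, hjmaxu⟩
    have hjS : j ∈ S := Amax_subset hjAc
    refine mem_Amax.mpr ⟨hjS, fun i hi => ?_⟩
    rw [fQ_lin hw M c u hi, fQ_lin hw M c u hjS]
    rcases lt_trichotomy (fQ w c i) (fQ w c j) with hlt | heq | hgt
    · have := key i j hi hjS hlt
      linarith
    · have hiAc : i ∈ Amax S w c := by
        refine mem_Amax.mpr ⟨hi, fun i' hi' => ?_⟩
        rw [heq]
        exact (mem_Amax.mp hjAc).2 i' hi'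
      have := hjmaxu i hiAc
      rw [heq]
      linarith
    · exact absurd hgt (not_lt.mpr ((mem_Amax.mp hjAc).2 i hi))

/-- Flat subsets: achieved argmax sets on which all lattice ratios agree. -/
def IsFlat (ψ : (Fin n → ℤ) →ₗ[ℤ] (Fin s → ℤ)) (S : Finset (Fin n)) (w : Fin n → ℤ)
    (F : Finset (Fin n)) : Prop :=
  (∃ c ∈ Lsub ψ S, Amax S w c = F) ∧ F ≠ S ∧
    ∀ u ∈ Lsub ψ S, ∀ i ∈ F, ∀ j ∈ F, u i * w j = u j * w i

lemma exists_flat_aux (ψ : (Fin n → ℤ) →ₗ[ℤ] (Fin s → ℤ)) (hw : WPos S w) (hS : S.Nonempty) :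
    ∀ m : ℕ, ∀ c ∈ Lsub ψ S, Amax S w c ≠ S → (Amax S w c).card ≤ m →
      ∃ F, IsFlat ψ S w F ∧ F ⊆ Amax S w c := by
  intro m
  induction m with
  | zero =>
    intro c _ _ hcard
    obtain ⟨j, hj⟩ := Amax_nonempty hS w c
    have : 0 < (Amax S w c).card := Finset.card_pos.mpr ⟨j, hj⟩
    omega
  | succ m ih =>
    intro c hc hne hcard
    by_cases hflat : ∀ u ∈ Lsub ψ S, ∀ i ∈ Amax S w c, ∀ j ∈ Amax S w c, u i * w j = u j * w i
    · exact ⟨Amax S w c, ⟨⟨c, hc, rfl⟩, hne, hflat⟩, Finset.Subset.refl _⟩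
    · push_neg at hflat
      obtain ⟨u, hu, i0, hi0, j0, hj0, hne0⟩ := hflat
      have hfne : fQ w u i0 ≠ fQ w u j0 := by
        intro h
        exact hne0 ((fQ_eq_iff hw (Amax_subset hi0) (Amax_subset hj0)).mp h)
      obtain ⟨M, hM, hAeq⟩ := amax_perturb hw c u
      set c' : Fin n → ℤ := (M : ℤ) • c + u with hc'
      have hc'L : c' ∈ Lsub ψ S :=
        Submodule.add_mem _ (Submodule.smul_mem _ _ hc) hu
      have hsub : Amax S w c' ⊆ Amax S w c := by
        rw [hAeq]; exact Finset.filter_subset _ _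
      have hproper : ∃ x ∈ Amax S w c, x ∉ Amax S w c' := by
        rcases lt_or_gt_of_ne hfne with hlt | hgt
        · refine ⟨i0, hi0, ?_⟩
          rw [hAeq]
          simp only [Finset.mem_filter, not_and, not_forall]
          intro _
          exact ⟨j0, hj0, by linarith⟩
        · refine ⟨j0, hj0, ?_⟩
          rw [hAeq]
          simp only [Finset.mem_filter, not_and, not_forall]
          intro _
          exact ⟨i0, hi0, by linarith⟩
      obtain ⟨x, hx1, hx2⟩ := hproper
      have hss : Amax S w c' ⊂ Amax S w c := ⟨hsub, fun h => hx2 (h hx1)⟩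
      have hcard' : (Amax S w c').card ≤ m := by
        have := Finset.card_lt_card hss
        omega
      have hne' : Amax S w c' ≠ S := by
        intro h
        apply hne
        apply Finset.Subset.antisymm Amax_subset
        intro y hy
        exact hsub (by rw [h]; exact hy)
      obtain ⟨F, hF, hFsub⟩ := ih c' hc'L hne' hcard'
      exact ⟨F, hF, hFsub.trans hsub⟩

end W
section W2
variable {S : Finset (Fin n)} {w : Fin n → ℤ}

noncomputable def Flats (ψ : (Fin n → ℤ) →ₗ[ℤ] (Fin s → ℤ)) (S : Finset (Fin n))
    (w : Fin n → ℤ) : Finset (Finset (Fin n)) :=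
  @Finset.filter _ (fun F => IsFlat ψ S w F) (Classical.decPred _) S.powerset

lemma flat_subset_S {ψ : (Fin n → ℤ) →ₗ[ℤ] (Fin s → ℤ)} {F : Finset (Fin n)}
    (h : IsFlat ψ S w F) : F ⊆ S := by
  obtain ⟨⟨c, _, hA⟩, _, _⟩ := h
  rw [← hA]
  exact Amax_subset

lemma mem_Flats {ψ : (Fin n → ℤ) →ₗ[ℤ] (Fin s → ℤ)} {F : Finset (Fin n)} :
    F ∈ Flats ψ S w ↔ IsFlat ψ S w F := by
  classical
  rw [Flats]
  rw [Finset.filter_congr_decidable]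
  constructor
  · intro h
    exact (Finset.mem_filter.mp h).2
  · intro h
    exact Finset.mem_filter.mpr ⟨Finset.mem_powerset.mpr (flat_subset_S h), h⟩

noncomputable def jsel (S : Finset (Fin n)) (hS : S.Nonempty) (F : Finset (Fin n)) : Fin n :=
  if h : F.Nonempty then F.min' h else S.min' hS

lemma jsel_mem {hS : S.Nonempty} {F : Finset (Fin n)} (hF : F.Nonempty) :
    jsel S hS F ∈ F := by
  rw [jsel, dif_pos hF]; exact F.min'_mem hF

lemma flat_nonempty {ψ : (Fin n → ℤ) →ₗ[ℤ] (Fin s → ℤ)} {F : Finset (Fin n)}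
    (hS : S.Nonempty) (h : IsFlat ψ S w F) : F.Nonempty := by
  obtain ⟨⟨c, _, hA⟩, _, _⟩ := h
  rw [← hA]
  exact Amax_nonempty hS w c

noncomputable def Tset (ψ : (Fin n → ℤ) →ₗ[ℤ] (Fin s → ℤ)) (S : Finset (Fin n))
    (w : Fin n → ℤ) (hS : S.Nonempty) : Finset (Fin n) :=
  (Flats ψ S w).image (jsel S hS)

lemma Tset_subset {ψ : (Fin n → ℤ) →ₗ[ℤ] (Fin s → ℤ)} {hS : S.Nonempty} :
    Tset ψ S w hS ⊆ S := by
  intro j hj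
  obtain ⟨F, hF, rfl⟩ := Finset.mem_image.mp hj
  have hflat := mem_Flats.mp hF
  exact flat_subset_S hflat (jsel_mem (flat_nonempty hS hflat))

lemma amax_ne_S {ψ : (Fin n → ℤ) →ₗ[ℤ] (Fin s → ℤ)} (hw : WPos S w) (hS : S.Nonempty)
    {c : Fin n → ℤ} (hc : c ∈ Lsub ψ S) (hcp : ¬ PropW w c) : Amax S w c ≠ S := by
  intro h
  exact hcp ((amax_eq_S_iff hw hS (fun j hj => (mem_Lsub.mp hc).2 j hj)).mp h)

lemma neg_not_PropW {c : Fin n → ℤ} (h : ¬ PropW w c) : ¬ PropW w (-c) := by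
  rintro ⟨q, hq⟩
  refine h ⟨-q, fun i => ?_⟩
  have := hq i
  simp only [Pi.neg_apply, Int.cast_neg] at this
  linarith

lemma le_zero_of_T_zero {ψ : (Fin n → ℤ) →ₗ[ℤ] (Fin s → ℤ)} (hw : WPos S w)
    (hS : S.Nonempty) {u : Fin n → ℤ} (hu : u ∈ Lsub ψ S) (hup : ¬ PropW w u)
    (hT : ∀ j ∈ Tset ψ S w hS, u j = 0) : ∀ i ∈ S, u i ≤ 0 := by
  intro i hi
  have hAne := amax_ne_S hw hS hu hup
  obtain ⟨F, hF, hFsub⟩ := exists_flat_aux ψ hw hS (Amax S w u).card u hu hAne le_rfl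
  have hFne := flat_nonempty hS hF
  set j := jsel S hS F with hj
  have hjF : j ∈ F := jsel_mem hFne
  have hjA : j ∈ Amax S w u := hFsub hjF
  have hjT : j ∈ Tset ψ S w hS := Finset.mem_image_of_mem _ (mem_Flats.mpr hF)
  have huj : u j = 0 := hT j hjT
  have hjS : j ∈ S := Amax_subset hjA
  have hle := (mem_Amax.mp hjA).2 i hi
  have := (fQ_le_iff hw hi hjS).mp hle
  rw [huj] at this
  have hwj := hw.1 j hjS
  nlinarith

lemma inj_T {ψ : (Fin n → ℤ) →ₗ[ℤ] (Fin s → ℤ)} (hw : WPos S w) (hS : S.Nonempty)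
    (hex : ∃ c ∈ Lsub ψ S, ¬ PropW w c) :
    ∀ v ∈ Lsub ψ S, (∀ j ∈ Tset ψ S w hS, v j = 0) → v = 0 := by
  intro v hv hT
  by_cases hprop : PropW w v
  · obtain ⟨q, hq⟩ := hprop
    obtain ⟨c, hc, hcp⟩ := hex
    have hAne := amax_ne_S hw hS hc hcp
    obtain ⟨F, hF, _⟩ := exists_flat_aux ψ hw hS (Amax S w c).card c hc hAne le_rfl
    have hFne := flat_nonempty hS hF
    have hjT : jsel S hS F ∈ Tset ψ S w hS :=
      Finset.mem_image_of_mem _ (mem_Flats.mpr hF)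
    set j := jsel S hS F with hjdef
    have hjS : j ∈ S := flat_subset_S hF (jsel_mem hFne)
    have h0 : v j = 0 := hT j hjT
    have hq0 : q = 0 := by
      have := hq j
      rw [h0] at this
      have hwj : (0:ℚ) < (w j : ℚ) := by exact_mod_cast hw.1 j hjS
      simp only [Int.cast_zero] at this
      rcases mul_eq_zero.mp this.symm with h | h
      · exact h
      · exact absurd h hwj.ne'
    funext i
    have := hq i
    rw [hq0, zero_mul] at this
    exact_mod_cast this
  · have h1 := le_zero_of_T_zero hw hS hv hprop hT
    have hvneg : -v ∈ Lsub ψ S := Submodule.neg_mem _ hv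
    have h2 := le_zero_of_T_zero hw hS hvneg (neg_not_PropW hprop)
      (fun j hj => by simp [hT j hj])
    funext i
    by_cases hi : i ∈ S
    · have := h1 i hi
      have h2' := h2 i hi
      simp only [Pi.neg_apply, neg_nonpos] at h2'
      simp only [Pi.zero_apply]
      omega
    · exact (mem_Lsub.mp hv).2 i hi

/-- sublattice of elements vanishing on F (inside L) -/
def Msub (ψ : (Fin n → ℤ) →ₗ[ℤ] (Fin s → ℤ)) (S F : Finset (Fin n)) :
    Submodule ℤ (Fin n → ℤ) where
  carrier := {v | ψ v = 0 ∧ (∀ j ∉ S, v j = 0) ∧ ∀ i ∈ F, v i = 0}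
  add_mem' := by
    rintro a b ⟨ha1, ha2, ha3⟩ ⟨hb1, hb2, hb3⟩
    refine ⟨by rw [map_add, ha1, hb1, add_zero], fun j hj => ?_, fun i hi => ?_⟩
    · simp [ha2 j hj, hb2 j hj]
    · simp [ha3 i hi, hb3 i hi]
  zero_mem' := ⟨map_zero ψ, fun j _ => rfl, fun i _ => rfl⟩
  smul_mem' := by
    rintro c a ⟨h1, h2, h3⟩
    refine ⟨by rw [map_smul, h1, smul_zero], fun j hj => ?_, fun i hi => ?_⟩
    · simp [h2 j hj]
    · simp [h3 i hi]

lemma mem_Msub {ψ : (Fin n → ℤ) →ₗ[ℤ] (Fin s → ℤ)} {S F : Finset (Fin n)} {v : Fin n → ℤ} :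
    v ∈ Msub ψ S F ↔ ψ v = 0 ∧ (∀ j ∉ S, v j = 0) ∧ ∀ i ∈ F, v i = 0 := Iff.rfl

lemma Msub_le_Lsub {ψ : (Fin n → ℤ) →ₗ[ℤ] (Fin s → ℤ)} {S F : Finset (Fin n)} :
    Msub ψ S F ≤ Lsub ψ S := by
  rintro v ⟨h1, h2, _⟩
  exact ⟨h1, h2⟩

noncomputable def Ksub (ψ : (Fin n → ℤ) →ₗ[ℤ] (Fin s → ℤ)) (S : Finset (Fin n))
    (w : Fin n → ℤ) : Submodule ℤ (Fin n → ℤ) :=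
  ⨆ F ∈ Flats ψ S w, Msub ψ S F

lemma Ksub_le_Lsub {ψ : (Fin n → ℤ) →ₗ[ℤ] (Fin s → ℤ)} :
    Ksub ψ S w ≤ Lsub ψ S :=
  iSup₂_le fun _ _ => Msub_le_Lsub

lemma Msub_le_Ksub {ψ : (Fin n → ℤ) →ₗ[ℤ] (Fin s → ℤ)} {F : Finset (Fin n)}
    (hF : F ∈ Flats ψ S w) : Msub ψ S F ≤ Ksub ψ S w :=
  le_iSup₂ (f := fun F (_ : F ∈ Flats ψ S w) => Msub ψ S F) F hF

end W2

section Qpart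
open Module

def castQ {m : ℕ} : (Fin m → ℤ) →ₗ[ℤ] (Fin m → ℚ) where
  toFun x := fun j => (x j : ℚ)
  map_add' x y := by funext j; push_cast; simp
  map_smul' z x := by
    funext j
    simp only [Pi.smul_apply, smul_eq_mul, RingHom.id_apply, zsmul_eq_mul]
    push_cast
    ring

lemma castQ_apply {m : ℕ} (x : Fin m → ℤ) (j : Fin m) : castQ x j = (x j : ℚ) := rfl

lemma castQ_inj {m : ℕ} {x : Fin m → ℤ} (h : castQ x = 0) : x = 0 := by
  funext j
  have := congrFun h j
  rw [castQ_apply, Pi.zero_apply] at this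
  simp only [Pi.zero_apply]
  exact_mod_cast this

noncomputable def psiQ (ψ : (Fin n → ℤ) →ₗ[ℤ] (Fin s → ℤ)) :
    (Fin n → ℚ) →ₗ[ℚ] (Fin s → ℚ) :=
  Matrix.toLin' ((LinearMap.toMatrix' ψ).map (fun z : ℤ => (z : ℚ)))

lemma psiQ_cast (ψ : (Fin n → ℤ) →ₗ[ℤ] (Fin s → ℤ)) (x : Fin n → ℤ) :
    psiQ ψ (castQ x) = castQ (ψ x) := by
  have hψ : ψ x = (LinearMap.toMatrix' ψ).mulVec x := by
    rw [← Matrix.toLin'_apply, Matrix.toLin'_toMatrix']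
  funext t
  rw [psiQ, Matrix.toLin'_apply, castQ_apply, hψ]
  simp only [Matrix.mulVec, dotProduct, Matrix.map_apply]
  push_cast
  rfl

/-- the rational solution space -/
def Wsub (ψ : (Fin n → ℤ) →ₗ[ℤ] (Fin s → ℤ)) (S : Finset (Fin n)) :
    Submodule ℚ (Fin n → ℚ) where
  carrier := {x | psiQ ψ x = 0 ∧ ∀ j ∉ S, x j = 0}
  add_mem' := by
    rintro a b ⟨ha1, ha2⟩ ⟨hb1, hb2⟩
    refine ⟨by rw [map_add, ha1, hb1, add_zero], fun j hj => ?_⟩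
    simp [ha2 j hj, hb2 j hj]
  zero_mem' := ⟨map_zero _, fun j _ => rfl⟩
  smul_mem' := by
    rintro c a ⟨h1, h2⟩
    refine ⟨by rw [map_smul, h1, smul_zero], fun j hj => ?_⟩
    simp [h2 j hj]

lemma mem_Wsub {ψ : (Fin n → ℤ) →ₗ[ℤ] (Fin s → ℤ)} {S : Finset (Fin n)} {x : Fin n → ℚ} :
    x ∈ Wsub ψ S ↔ psiQ ψ x = 0 ∧ ∀ j ∉ S, x j = 0 := Iff.rfl

lemma exists_denom {m : ℕ} (x : Fin m → ℚ) :
    ∃ D : ℤ, D ≠ 0 ∧ ∃ v : Fin m → ℤ, ∀ j, (v j : ℚ) = (D : ℚ) * x j := by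
  obtain ⟨b, hb⟩ := IsLocalization.exist_integer_multiples (nonZeroDivisors ℤ)
    (Finset.univ : Finset (Fin m)) x
  refine ⟨(b : ℤ), nonZeroDivisors.coe_ne_zero b, ?_⟩
  choose v hv using fun j => hb j (Finset.mem_univ j)
  refine ⟨v, fun j => ?_⟩
  have := hv j
  rw [Algebra.smul_def] at this
  simpa using this

lemma castQ_mem_Wsub {ψ : (Fin n → ℤ) →ₗ[ℤ] (Fin s → ℤ)} {S : Finset (Fin n)}
    {v : Fin n → ℤ} (hv : v ∈ Lsub ψ S) : castQ v ∈ Wsub ψ S := by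
  obtain ⟨h1, h2⟩ := mem_Lsub.mp hv
  refine ⟨by rw [psiQ_cast, h1, map_zero], fun j hj => ?_⟩
  rw [castQ_apply, h2 j hj, Int.cast_zero]

lemma Wsub_denom {ψ : (Fin n → ℤ) →ₗ[ℤ] (Fin s → ℤ)} {S : Finset (Fin n)}
    {x : Fin n → ℚ} (hx : x ∈ Wsub ψ S) :
    ∃ D : ℤ, D ≠ 0 ∧ ∃ v ∈ Lsub ψ S, castQ v = (D : ℚ) • x := by
  obtain ⟨D, hD, v, hv⟩ := exists_denom x
  have hcast : castQ v = (D : ℚ) • x := by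
    funext j
    rw [castQ_apply, hv j, Pi.smul_apply, smul_eq_mul]
  refine ⟨D, hD, v, ?_, hcast⟩
  constructor
  · have h1 : psiQ ψ (castQ v) = 0 := by
      rw [hcast, map_smul, hx.1, smul_zero]
    rw [psiQ_cast] at h1
    funext t
    have := congrFun h1 t
    rw [castQ_apply, Pi.zero_apply] at this
    simp only [Pi.zero_apply]
    exact_mod_cast this
  · intro j hj
    have : (v j : ℚ) = 0 := by rw [hv j, hx.2 j hj, mul_zero]
    exact_mod_cast this

/-- extension-by-zero map -/
def extendS (S : Finset (Fin n)) : ({j // j ∈ S} → ℚ) →ₗ[ℚ] (Fin n → ℚ) where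
  toFun x := fun j => if h : j ∈ S then x ⟨j, h⟩ else 0
  map_add' x y := by
    funext j
    by_cases h : j ∈ S <;> simp [h]
  map_smul' c x := by
    funext j
    by_cases h : j ∈ S <;> simp [h]

lemma rk1 (ψ : (Fin n → ℤ) →ₗ[ℤ] (Fin s → ℤ)) (S : Finset (Fin n)) :
    S.card ≤ finrank ℚ (Wsub ψ S) + s := by
  classical
  set Θ : ({j // j ∈ S} → ℚ) →ₗ[ℚ] (Fin s → ℚ) := (psiQ ψ).comp (extendS S) with hΘ
  have hrn := LinearMap.finrank_range_add_finrank_ker Θ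
  have hdom : finrank ℚ ({j // j ∈ S} → ℚ) = S.card := by
    rw [Module.finrank_pi]
    exact Fintype.card_coe S
  have hrange : finrank ℚ (LinearMap.range Θ) ≤ s := by
    have := Submodule.finrank_le (LinearMap.range Θ)
    rwa [Module.finrank_pi, Fintype.card_fin] at this
  -- inject the kernel into Wsub
  have hker : finrank ℚ (LinearMap.ker Θ) ≤ finrank ℚ (Wsub ψ S) := by
    have hmem : ∀ x : LinearMap.ker Θ, extendS S x.val ∈ Wsub ψ S := by
      rintro ⟨x, hx⟩
      refine ⟨?_, fun j hj => ?_⟩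
      · exact hx
      · simp [extendS, dif_neg hj]
    set g : LinearMap.ker Θ →ₗ[ℚ] Wsub ψ S :=
      { toFun := fun x => ⟨extendS S x.val, hmem x⟩
        map_add' := by intro a b; apply Subtype.ext; simp
        map_smul' := by intro c a; apply Subtype.ext; simp } with hg
    have hinj : Function.Injective g := by
      intro a b hab
      apply Subtype.ext
      have h1 : extendS S a.val = extendS S b.val := congrArg Subtype.val hab
      funext j
      have := congrFun h1 j.val
      simpa [extendS, dif_pos j.prop] using this
    exact LinearMap.finrank_le_finrank_of_injective hinj
  omega

lemma exists_nonprop {ψ : (Fin n → ℤ) →ₗ[ℤ] (Fin s → ℤ)} {S : Finset (Fin n)}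
    {w : Fin n → ℤ} (hwL : w ∈ Lsub ψ S)
    (h2 : 2 ≤ finrank ℚ (Wsub ψ S)) : ∃ c ∈ Lsub ψ S, ¬ PropW w c := by
  by_contra hcon
  push_neg at hcon
  have hspan : Wsub ψ S ≤ Submodule.span ℚ {castQ w} := by
    intro x hx
    obtain ⟨D, hD, v, hvL, hcast⟩ := Wsub_denom hx
    obtain ⟨q, hq⟩ := hcon v hvL
    have h1 : castQ v = q • castQ w := by
      funext j
      rw [castQ_apply, hq j, Pi.smul_apply, castQ_apply, smul_eq_mul]
    have hDne : (D : ℚ) ≠ 0 := by exact_mod_cast hD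
    have h2' : x = (D : ℚ)⁻¹ • castQ v := by
      rw [hcast, inv_smul_smul₀ hDne]
    rw [h2', h1, smul_smul]
    exact Submodule.smul_mem _ _ (Submodule.mem_span_singleton_self _)
  have hle : finrank ℚ (Wsub ψ S) ≤ finrank ℚ (Submodule.span ℚ ({castQ w} : Set (Fin n → ℚ))) :=
    Submodule.finrank_mono hspan
  have hone : finrank ℚ (Submodule.span ℚ ({castQ w} : Set (Fin n → ℚ))) ≤ 1 := by
    have h := finrank_span_le_card (R := ℚ) ({castQ w} : Set (Fin n → ℚ))
    simpa using h
  omega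

end Qpart

section RankPart
open Module

variable {S : Finset (Fin n)} {w : Fin n → ℤ} {r : ℕ}

lemma castQ_sum_repr {ψ : (Fin n → ℤ) →ₗ[ℤ] (Fin s → ℤ)}
    (bO : Basis (Fin r) ℤ (Lsub ψ S)) (vL : Lsub ψ S) :
    castQ (vL : Fin n → ℤ) = ∑ i, (bO.repr vL i : ℚ) • castQ ((bO i : Fin n → ℤ)) := by
  set cmap : Lsub ψ S →ₗ[ℤ] (Fin n → ℚ) := castQ.comp ((Lsub ψ S).subtype) with hcmap
  have hv := bO.sum_repr vL
  have h1 := congrArg cmap hv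
  rw [map_sum] at h1
  have h2 : ∀ i, cmap (bO.repr vL i • bO i) = (bO.repr vL i : ℚ) • castQ ((bO i : Fin n → ℤ)) := by
    intro i
    rw [map_smul, Int.cast_smul_eq_zsmul]
    rfl
  calc castQ (vL : Fin n → ℤ) = cmap vL := rfl
    _ = ∑ i, cmap (bO.repr vL i • bO i) := h1.symm
    _ = ∑ i, (bO.repr vL i : ℚ) • castQ ((bO i : Fin n → ℤ)) := by
        exact Finset.sum_congr rfl (fun i _ => h2 i)

lemma rk2a {ψ : (Fin n → ℤ) →ₗ[ℤ] (Fin s → ℤ)} (bO : Basis (Fin r) ℤ (Lsub ψ S)) :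
    finrank ℚ (Wsub ψ S) ≤ r := by
  classical
  set f : Fin r → (Fin n → ℚ) := fun i => castQ ((bO i : Fin n → ℤ)) with hf
  have hspan : Wsub ψ S ≤ Submodule.span ℚ (Set.range f) := by
    intro x hx
    obtain ⟨D, hD, v, hvL, hcast⟩ := Wsub_denom hx
    have hDne : (D : ℚ) ≠ 0 := by exact_mod_cast hD
    have hxv : x = (D : ℚ)⁻¹ • castQ v := by rw [hcast, inv_smul_smul₀ hDne]
    rw [hxv]
    apply Submodule.smul_mem
    rw [castQ_sum_repr bO ⟨v, hvL⟩]
    apply Submodule.sum_mem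
    intro i _
    exact Submodule.smul_mem _ _ (Submodule.subset_span (Set.mem_range_self i))
  calc finrank ℚ (Wsub ψ S) ≤ finrank ℚ (Submodule.span ℚ (Set.range f)) :=
        Submodule.finrank_mono hspan
    _ ≤ Fintype.card (Fin r) := by
        have h := finrank_range_le_card (R := ℚ) f
        rw [Set.finrank] at h
        exact h
    _ = r := Fintype.card_fin r

lemma rk2b {ψ : (Fin n → ℤ) →ₗ[ℤ] (Fin s → ℤ)} (bO : Basis (Fin r) ℤ (Lsub ψ S)) :
    r ≤ finrank ℚ (Wsub ψ S) := by
  classical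
  set g : Fin r → Wsub ψ S := fun i => ⟨castQ ((bO i : Fin n → ℤ)), castQ_mem_Wsub (bO i).prop⟩
    with hg
  have hli : LinearIndependent ℚ g := by
    rw [Fintype.linearIndependent_iff]
    intro q hq
    obtain ⟨D, hD, z, hz⟩ := exists_denom q
    have h0 : (∑ i, q i • g i : Wsub ψ S).val = 0 := by rw [hq]; rfl
    have h0' : ∑ i, q i • castQ ((bO i : Fin n → ℤ)) = 0 := by
      rw [← h0]
      push_cast
      rfl
    have h1 : castQ (∑ i, z i • ((bO i : Fin n → ℤ))) = 0 := by
      rw [map_sum]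
      have hterm : ∀ i, castQ (z i • ((bO i : Fin n → ℤ))) =
          (D : ℤ) • (q i • castQ ((bO i : Fin n → ℤ))) := by
        intro i
        rw [map_smul, ← Int.cast_smul_eq_zsmul (R := ℚ), hz i, mul_smul,
          Int.cast_smul_eq_zsmul]
      rw [Finset.sum_congr rfl (fun i _ => hterm i), ← Finset.smul_sum, h0', smul_zero]
    have h2 : ∑ i, z i • ((bO i : Fin n → ℤ)) = 0 := castQ_inj h1
    have h3 : (∑ i, z i • bO i : Lsub ψ S) = 0 := by
      have hcoe : ((∑ i, z i • bO i : Lsub ψ S) : Fin n → ℤ) =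
          ∑ i, z i • ((bO i : Fin n → ℤ)) := by
        simp
      apply Subtype.ext
      rw [hcoe, h2]
      rfl
    have h4 : ∀ i, z i = 0 :=
      Fintype.linearIndependent_iff.mp bO.linearIndependent z h3
    intro i
    have := hz i
    rw [h4 i] at this
    simp only [Int.cast_zero] at this
    rcases mul_eq_zero.mp this.symm with h | h
    · exact absurd h (by exact_mod_cast hD)
    · exact h
  have := hli.fintype_card_le_finrank
  rwa [Fintype.card_fin] at this

lemma rk3 {ψ : (Fin n → ℤ) →ₗ[ℤ] (Fin s → ℤ)} (hw : WPos S w) (hS : S.Nonempty)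
    (hex : ∃ c ∈ Lsub ψ S, ¬ PropW w c) :
    finrank ℚ (Wsub ψ S) ≤ (Tset ψ S w hS).card := by
  classical
  set ρ : Wsub ψ S →ₗ[ℚ] ({j // j ∈ Tset ψ S w hS} → ℚ) :=
    { toFun := fun x => fun j => x.val j.val
      map_add' := by intros; rfl
      map_smul' := by intros; rfl } with hρ
  have hinj : Function.Injective ρ := by
    rw [← LinearMap.ker_eq_bot]
    apply (Submodule.eq_bot_iff _).mpr
    rintro ⟨x, hx⟩ hker
    have hx0 : ∀ j ∈ Tset ψ S w hS, x j = 0 := by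
      intro j hj
      exact congrFun (hker : ρ ⟨x, hx⟩ = 0) ⟨j, hj⟩
    obtain ⟨D, hD, v, hvL, hcast⟩ := Wsub_denom hx
    have hv0 : ∀ j ∈ Tset ψ S w hS, v j = 0 := by
      intro j hj
      have : (v j : ℚ) = (D : ℚ) * x j := by
        have := congrFun hcast j
        rwa [castQ_apply, Pi.smul_apply, smul_eq_mul] at this
      rw [hx0 j hj, mul_zero] at this
      exact_mod_cast this
    have hveq : v = 0 := inj_T hw hS hex v hvL hv0
    have hx0' : x = 0 := by
      have : castQ v = 0 := by rw [hveq]; exact map_zero _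
      rw [hcast] at this
      have hDne : (D : ℚ) ≠ 0 := by exact_mod_cast hD
      rcases smul_eq_zero.mp this with h | h
      · exact absurd h hDne
      · exact h
    exact Subtype.ext hx0'
  have h := LinearMap.finrank_le_finrank_of_injective hinj
  rwa [Module.finrank_pi, Fintype.card_coe] at h

end RankPart

section ModP
open Module

variable {S : Finset (Fin n)} {w : Fin n → ℤ} {r : ℕ}

lemma theta_vanish {ψ : (Fin n → ℤ) →ₗ[ℤ] (Fin s → ℤ)} (hw : WPos S w) (hS : S.Nonempty)
    (hwL : w ∈ Lsub ψ S)
    (bO : Basis (Fin r) ℤ (Lsub ψ S))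
    (hcount : 1 + (S \ Tset ψ S w hS).card < r)
    (p : ℕ) (hp : p.Prime) (θ : Lsub ψ S →ₗ[ℤ] ZMod p)
    (hθK : ∀ x : Lsub ψ S, (x : Fin n → ℤ) ∈ Ksub ψ S w → θ x = 0) :
    θ = 0 := by
  classical
  haveI : Fact p.Prime := ⟨hp⟩
  haveI : NeZero p := ⟨hp.ne_zero⟩
  by_contra hne
  have hu0 : ∃ u0 : Lsub ψ S, θ u0 ≠ 0 := by
    by_contra hcon
    push_neg at hcon
    exact hne (LinearMap.ext fun x => hcon x)
  obtain ⟨u0, hu0⟩ := hu0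
  -- Claim A : coordinates jsel F of θ-kernel elements are divisible by p
  have claimA : ∀ F ∈ Flats ψ S w, ∀ vL : Lsub ψ S, θ vL = 0 →
      (p : ℤ) ∣ (vL : Fin n → ℤ) (jsel S hS F) := by
    intro F hF vL hv
    have hflat := mem_Flats.mp hF
    set j := jsel S hS F with hjdef
    have hjF : j ∈ F := jsel_mem (flat_nonempty hS hflat)
    have hjS : j ∈ S := flat_subset_S hflat hjF
    set coordmap : Lsub ψ S →ₗ[ℤ] ℤ := (LinearMap.proj j).comp ((Lsub ψ S).subtype)
      with hcoordmap
    haveI hprin : (LinearMap.range coordmap).IsPrincipal :=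
      IsPrincipalIdealRing.principal _
    set d : ℤ := Submodule.IsPrincipal.generator (LinearMap.range coordmap) with hd
    have hdvd : ∀ uL : Lsub ψ S, d ∣ (uL : Fin n → ℤ) j := by
      intro uL
      have hmem : (uL : Fin n → ℤ) j ∈ LinearMap.range coordmap := ⟨uL, rfl⟩
      exact (Submodule.IsPrincipal.mem_iff_generator_dvd _).mp hmem
    have hwj := hw.1 j hjS
    have hdne : d ≠ 0 := by
      intro h0
      have hdw := hdvd ⟨w, hwL⟩
      rw [h0, zero_dvd_iff] at hdw
      simp only at hdw
      omega
    obtain ⟨eL, heL⟩ : ∃ eL : Lsub ψ S, coordmap eL = d :=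
      LinearMap.mem_range.mp (Submodule.IsPrincipal.generator_mem (LinearMap.range coordmap))
    have hdecomp : ∀ uL : Lsub ψ S,
        ((uL - ((uL : Fin n → ℤ) j / d) • eL : Lsub ψ S) : Fin n → ℤ) ∈ Msub ψ S F := by
      intro uL
      set q : ℤ := (uL : Fin n → ℤ) j / d with hq
      have hmem : ((uL - q • eL : Lsub ψ S) : Fin n → ℤ) ∈ Lsub ψ S := (uL - q • eL).prop
      obtain ⟨h1, h2⟩ := mem_Lsub.mp hmem
      refine ⟨h1, h2, ?_⟩
      have hej : (eL : Fin n → ℤ) j = d := heL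
      have hvalj : ((uL - q • eL : Lsub ψ S) : Fin n → ℤ) j = 0 := by
        have hv1 : ((uL - q • eL : Lsub ψ S) : Fin n → ℤ) j =
            (uL : Fin n → ℤ) j - q * (eL : Fin n → ℤ) j := by
          simp
        rw [hv1, hej, hq, Int.ediv_mul_cancel (hdvd uL), sub_self]
      intro i hiF
      have hfl := hflat.2.2 _ hmem i hiF j hjF
      rw [hvalj, zero_mul] at hfl
      rcases mul_eq_zero.mp hfl with h | h
      · exact h
      · omega
    have hexp : ∀ uL : Lsub ψ S,
        θ uL = ((uL : Fin n → ℤ) j / d) • θ eL +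
          θ (uL - ((uL : Fin n → ℤ) j / d) • eL) := by
      intro uL
      rw [map_sub, map_smul]
      abel
    have hθe : θ eL ≠ 0 := by
      intro h0
      apply hu0
      have hKmem : ((u0 - ((u0 : Fin n → ℤ) j / d) • eL : Lsub ψ S) : Fin n → ℤ) ∈ Ksub ψ S w :=
        Msub_le_Ksub hF (hdecomp u0)
      rw [hexp u0, hθK _ hKmem, h0, smul_zero, add_zero]
    have hKmem : ((vL - ((vL : Fin n → ℤ) j / d) • eL : Lsub ψ S) : Fin n → ℤ) ∈ Ksub ψ S w :=
      Msub_le_Ksub hF (hdecomp vL)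
    have h0 : (0 : ZMod p) = ((vL : Fin n → ℤ) j / d) • θ eL := by
      rw [← hv, hexp vL, hθK _ hKmem, add_zero]
    have hq0 : ((((vL : Fin n → ℤ) j / d : ℤ) : ZMod p)) * θ eL = 0 := by
      rw [← smul_eq_mul, Int.cast_smul_eq_zsmul]
      exact h0.symm
    have hpq : (p : ℤ) ∣ ((vL : Fin n → ℤ) j / d) := by
      rcases mul_eq_zero.mp hq0 with h | h
      · exact (ZMod.intCast_zmod_eq_zero_iff_dvd _ _).mp h
      · exact absurd h hθe
    have hqd : ((vL : Fin n → ℤ) j / d) * d = (vL : Fin n → ℤ) j :=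
      Int.ediv_mul_cancel (hdvd vL)
    rw [← hqd]
    exact hpq.mul_right d
  -- Step B : find a kernel vector with extra vanishing
  set T := Tset ψ S w hS with hT
  set J := S \ T with hJ
  set A : Matrix (Option {j // j ∈ J}) (Fin r) (ZMod p) := fun o i =>
    match o with
    | none => θ (bO i)
    | some jj => (((bO i : Fin n → ℤ) jj.val : ℤ) : ZMod p)
    with hA
  set Φ := Matrix.toLin' A with hΦ
  have hnotinj : ¬ Function.Injective Φ := by
    intro hinj
    have hle := LinearMap.finrank_le_finrank_of_injective hinj
    rw [Module.finrank_pi, Module.finrank_pi, Fintype.card_fin, Fintype.card_option,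
      Fintype.card_coe] at hle
    omega
  have hker : ∃ x : Fin r → ZMod p, x ≠ 0 ∧ Φ x = 0 := by
    by_contra hcon
    push_neg at hcon
    apply hnotinj
    rw [← LinearMap.ker_eq_bot]
    apply (Submodule.eq_bot_iff _).mpr
    intro x hx
    by_contra hxne
    exact hxne (by_contra fun h => hxne (False.elim ((hcon x (fun h0 => hxne h0)) hx)))
  obtain ⟨x, hx0, hΦx⟩ := hker
  set X : Fin r → ℤ := fun i => ((x i).val : ℤ) with hX
  have hXcast : ∀ i, ((X i : ℤ) : ZMod p) = x i := by
    intro i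
    rw [hX]
    push_cast
    exact ZMod.natCast_rightInverse (x i)
  set vL : Lsub ψ S := ∑ i, X i • bO i with hvL
  have hval : (vL : Fin n → ℤ) = ∑ i, X i • ((bO i : Fin n → ℤ)) := by
    rw [hvL]
    simp
  -- the mulVec components
  have hΦcomp : ∀ o, ∑ i, A o i * x i = 0 := by
    intro o
    have := congrFun hΦx o
    rwa [hΦ, Matrix.toLin'_apply, Matrix.mulVec, dotProduct] at this
  -- θ vL = 0
  have hθv : θ vL = 0 := by
    have h1 : θ vL = ∑ i, X i • θ (bO i) := by
      rw [hvL, map_sum]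
      exact Finset.sum_congr rfl (fun i _ => by rw [map_smul])
    have h2 : ∀ i, X i • θ (bO i) = A none i * x i := by
      intro i
      rw [← Int.cast_smul_eq_zsmul (ZMod p), smul_eq_mul, hXcast i, hA]
      exact mul_comm _ _
    rw [h1]
    have h3 : ∑ i, X i • θ (bO i) = ∑ i, A none i * x i :=
      Finset.sum_congr rfl (fun i _ => h2 i)
    rw [h3]
    exact hΦcomp none
  -- divisibility of all coordinates
  have hdivall : ∀ jj : Fin n, (p : ℤ) ∣ (vL : Fin n → ℤ) jj := by
    intro jj
    by_cases hjS : jj ∈ S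
    · by_cases hjT : jj ∈ T
      · obtain ⟨F, hF, hFj⟩ := Finset.mem_image.mp hjT
        rw [← hFj]
        exact claimA F hF vL hθv
      · have hjJ : jj ∈ J := by rw [hJ]; exact Finset.mem_sdiff.mpr ⟨hjS, hjT⟩
        have hcast : (((vL : Fin n → ℤ) jj : ℤ) : ZMod p) = 0 := by
          have h1 : (((vL : Fin n → ℤ) jj : ℤ) : ZMod p) =
              ∑ i, A (some ⟨jj, hjJ⟩) i * x i := by
            rw [hval, Finset.sum_apply]
            push_cast
            refine Finset.sum_congr rfl (fun i _ => ?_)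
            simp only [Pi.smul_apply, smul_eq_mul, hA]
            push_cast
            rw [hXcast i]
            ring
          rw [h1]
          exact hΦcomp (some ⟨jj, hjJ⟩)
        exact (ZMod.intCast_zmod_eq_zero_iff_dvd _ _).mp hcast
    · have : (vL : Fin n → ℤ) jj = 0 := (mem_Lsub.mp vL.prop).2 jj hjS
      rw [this]
      exact dvd_zero _
  -- divide by p
  set uu : Fin n → ℤ := fun jj => (vL : Fin n → ℤ) jj / p with huu
  have hpu : (vL : Fin n → ℤ) = (p : ℤ) • uu := by
    funext jj
    rw [Pi.smul_apply, huu, smul_eq_mul, Int.mul_ediv_cancel' (hdivall jj)]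
  have huuL : uu ∈ Lsub ψ S := by
    constructor
    · have h1 : ψ (vL : Fin n → ℤ) = 0 := (mem_Lsub.mp vL.prop).1
      rw [hpu, map_smul] at h1
      have hp0 : (p : ℤ) ≠ 0 := by exact_mod_cast hp.ne_zero
      rcases smul_eq_zero.mp h1 with h | h
      · exact absurd h hp0
      · exact h
    · intro jj hjj
      rw [huu]
      simp only
      rw [(mem_Lsub.mp vL.prop).2 jj hjj, Int.zero_ediv]
  have hveq : vL = (p : ℤ) • (⟨uu, huuL⟩ : Lsub ψ S) := by
    apply Subtype.ext
    rw [hpu]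
    rfl
  have hrepr : ∀ i, bO.repr vL i = X i := by
    intro i
    rw [hvL]
    have := bO.repr_sum_self X
    rw [this]
  have hreq : ∀ i, X i = (p : ℤ) * bO.repr ⟨uu, huuL⟩ i := by
    intro i
    rw [← hrepr i, hveq, map_smul]
    simp
  have hx0' : x = 0 := by
    funext i
    rw [← hXcast i, hreq i]
    push_cast
    simp
  exact hx0 hx0'

end ModP

section Final
open Module

variable {S : Finset (Fin n)} {w : Fin n → ℤ}

lemma Lsub_le_Ksub {ψ : (Fin n → ℤ) →ₗ[ℤ] (Fin s → ℤ)} (hw : WPos S w) (hS : S.Nonempty)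
    (hwL : w ∈ Lsub ψ S) (hk : 2 * s + 2 ≤ S.card) :
    Lsub ψ S ≤ Ksub ψ S w := by
  classical
  obtain ⟨m, r, hmr, bO, bN, a, ha⟩ :=
    Submodule.exists_smith_normal_form_of_le (Pi.basisFun ℤ (Fin n)) (Ksub ψ S w)
      (Lsub ψ S) Ksub_le_Lsub
  have hr2a := rk2a bO
  have hr2b := rk2b bO
  have hr1 := rk1 ψ S
  have hfr2 : 2 ≤ finrank ℚ (Wsub ψ S) := by omega
  have hex : ∃ c ∈ Lsub ψ S, ¬ PropW w c := exists_nonprop hwL hfr2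
  have hr3 := rk3 hw hS hex
  have hTsub : Tset ψ S w hS ⊆ S := Tset_subset
  have hTcard : (Tset ψ S w hS).card ≤ S.card := Finset.card_le_card hTsub
  have hJcard : (S \ Tset ψ S w hS).card = S.card - (Tset ψ S w hS).card :=
    Finset.card_sdiff_of_subset hTsub
  have hcount : 1 + (S \ Tset ψ S w hS).card < r := by omega
  -- coordinate functionals mod p vanish on K when the diagonal entries hit are divisible
  have claimK : ∀ (pd : ℤ) (i0 : Fin r),
      (∀ i : Fin m, Fin.castLE hmr i = i0 → pd ∣ a i) →
      ∀ x : Lsub ψ S, (x : Fin n → ℤ) ∈ Ksub ψ S w → pd ∣ bO.repr x i0 := by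
    intro pd i0 hdiag x hx
    set xK : Ksub ψ S w := ⟨(x : Fin n → ℤ), hx⟩ with hxK
    have hNL : ∀ i : Fin m, (Submodule.inclusion (Ksub_le_Lsub (ψ := ψ) (S := S) (w := w)) (bN i)) =
        a i • bO (Fin.castLE hmr i) := by
      intro i
      apply Subtype.ext
      have h1 : ((a i • bO (Fin.castLE hmr i) : Lsub ψ S) : Fin n → ℤ) =
          a i • ((bO (Fin.castLE hmr i) : Fin n → ℤ)) := rfl
      rw [h1, ← ha i]
      rfl
    have hxinc : x = Submodule.inclusion (Ksub_le_Lsub (ψ := ψ) (S := S) (w := w)) xK :=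
      Subtype.ext rfl
    have hxsum : x = ∑ i : Fin m, (bN.repr xK i * a i) • bO (Fin.castLE hmr i) := by
      have h2 := congrArg (Submodule.inclusion (Ksub_le_Lsub (ψ := ψ) (S := S) (w := w)))
        (bN.sum_repr xK)
      rw [hxinc, ← h2, map_sum]
      refine Finset.sum_congr rfl (fun i _ => ?_)
      rw [map_smul, hNL i, smul_smul]
    have h5 : bO.repr x i0 =
        ∑ i : Fin m, (bN.repr xK i * a i) * (if Fin.castLE hmr i = i0 then 1 else 0) := by
      rw [hxsum, map_sum, Finsupp.finset_sum_apply]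
      refine Finset.sum_congr rfl (fun i _ => ?_)
      rw [map_smul, Finsupp.smul_apply, Basis.repr_self, Finsupp.single_apply, smul_eq_mul]
    rw [h5]
    apply Finset.dvd_sum
    intro i _
    by_cases hci : Fin.castLE hmr i = i0
    · rw [if_pos hci, mul_one]
      exact Dvd.dvd.mul_left (hdiag i hci) _
    · rw [if_neg hci, mul_zero]
      exact dvd_zero _
  -- vanishing lemma applied to coordinate functionals
  have hcoordθ : ∀ (p : ℕ), p.Prime → ∀ i0 : Fin r,
      (∀ i : Fin m, Fin.castLE hmr i = i0 → (p : ℤ) ∣ a i) → False := by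
    intro p hp i0 hdiag
    set castlin : ℤ →ₗ[ℤ] ZMod p := (Int.castAddHom (ZMod p)).toIntLinearMap with hcastlin
    set θ : Lsub ψ S →ₗ[ℤ] ZMod p := castlin.comp (bO.coord i0) with hθ
    have hθK : ∀ x : Lsub ψ S, (x : Fin n → ℤ) ∈ Ksub ψ S w → θ x = 0 := by
      intro x hx
      have hdvd := claimK (p : ℤ) i0 hdiag x hx
      have : θ x = ((bO.repr x i0 : ℤ) : ZMod p) := rfl
      rw [this]
      exact (ZMod.intCast_zmod_eq_zero_iff_dvd _ _).mpr hdvd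
    have hvan := theta_vanish hw hS hwL bO hcount p hp θ hθK
    haveI : Fact p.Prime := ⟨hp⟩
    have h1 : θ (bO i0) = 1 := by
      have : θ (bO i0) = ((bO.repr (bO i0) i0 : ℤ) : ZMod p) := rfl
      rw [this, Basis.repr_self, Finsupp.single_apply, if_pos rfl]
      simp
    rw [hvan] at h1
    simp at h1
  -- m = r
  have hm : m = r := by
    by_contra hmr'
    have hmlt : m < r := lt_of_le_of_ne hmr hmr'
    refine hcoordθ 2 Nat.prime_two ⟨m, hmlt⟩ ?_
    intro i hci
    exfalso
    have : (Fin.castLE hmr i).val = i.val := rfl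
    rw [hci] at this
    simp only at this
    omega
  -- all diagonal entries are units
  have hunit : ∀ i : Fin m, IsUnit (a i) := by
    intro i
    by_contra hno
    have hane : a i ≠ 0 := by
      intro h0
      have h1 : ((bN i : Fin n → ℤ)) = 0 := by rw [ha i, h0, zero_smul]
      have h2 : bN i = 0 := Subtype.ext h1
      exact Basis.ne_zero bN i h2
    have hnat : (a i).natAbs ≠ 1 := by
      intro h1
      exact hno (Int.isUnit_iff_natAbs_eq.mpr h1)
    obtain ⟨pz, hpz, hpdvd⟩ := Int.exists_prime_and_dvd hnat
    have hpnat : pz.natAbs.Prime := Int.prime_iff_natAbs_prime.mp hpz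
    refine hcoordθ pz.natAbs hpnat (Fin.castLE hmr i) ?_
    intro i' hci'
    have : i' = i := by
      have := congrArg Fin.val hci'
      change i'.val = i.val at this
      exact Fin.ext this
    rw [this]
    rwa [Int.natAbs_dvd]
  -- conclude
  have hbOK : ∀ j : Fin r, ((bO j : Fin n → ℤ)) ∈ Ksub ψ S w := by
    intro j
    have hj : ∃ i : Fin m, Fin.castLE hmr i = j := by
      refine ⟨⟨j.val, by omega⟩, ?_⟩
      apply Fin.ext
      rfl
    obtain ⟨i, hi⟩ := hj
    rcases Int.isUnit_iff.mp (hunit i) with h1 | h1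
    · have := ha i
      rw [h1, one_smul, hi] at this
      rw [← this]
      exact (bN i).prop
    · have := ha i
      rw [h1, hi] at this
      have h2 : ((bO j : Fin n → ℤ)) = -((bN i : Fin n → ℤ)) := by
        rw [this]; simp
      rw [h2]
      exact Submodule.neg_mem _ (bN i).prop
  intro x hx
  have hsum := bO.sum_repr ⟨x, hx⟩
  have hval : x = ∑ j, bO.repr ⟨x, hx⟩ j • ((bO j : Fin n → ℤ)) := by
    have h := congrArg Subtype.val hsum
    simp only [Submodule.coe_sum, Submodule.coe_smul] at h
    exact h.symm
  rw [hval]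
  exact Submodule.sum_mem _ (fun j _ => Submodule.smul_mem _ _ (hbOK j))

end Final

theorem core_step (n' s' : ℕ) (ψ : (Fin n' → ℤ) →ₗ[ℤ] (Fin s' → ℤ)) (S : Finset (Fin n'))
    (hk : 2 * s' + 2 ≤ S.card)
    (IH : ∀ b v : Fin n' → ℤ, (∀ i, 0 ≤ b i) → ψ b = 0 →
      (Finset.univ.filter (fun i => b i ≠ 0)).card < S.card →
      ψ v = 0 → (∀ i, b i = 0 → v i = 0) →
      v ∈ AddSubgroup.closure (Gset n' s' ψ))
    (w : Fin n' → ℤ) (hw0 : ∀ i, 0 ≤ w i) (hwψ : ψ w = 0)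
    (hwS : ∀ i, i ∈ S ↔ w i ≠ 0) :
    w ∈ AddSubgroup.closure (Gset n' s' ψ) := by
  classical
  have hS : S.Nonempty := Finset.card_pos.mp (by omega)
  have hw : WPos S w := by
    constructor
    · intro i hi
      have h1 := (hwS i).mp hi
      have h2 := hw0 i
      omega
    · intro i hi
      by_contra h
      exact hi ((hwS i).mpr h)
  have hwL : w ∈ Lsub ψ S := ⟨hwψ, fun j hj => hw.2 j hj⟩
  have hKmem : w ∈ Ksub ψ S w := Lsub_le_Ksub hw hS hwL hk hwL
  have hMF : ∀ F, F ∈ Flats ψ S w → ∀ u ∈ Msub ψ S F,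
      u ∈ AddSubgroup.closure (Gset n' s' ψ) := by
    intro F hF u hu
    have hflat := mem_Flats.mp hF
    obtain ⟨⟨c, hcL, hAc⟩, hFneS, hflatcond⟩ := hflat
    have hFsubS : F ⊆ S := by rw [← hAc]; exact Amax_subset
    have hFne : F.Nonempty := flat_nonempty hS (mem_Flats.mp hF)
    set j0 := jsel S hS F with hj0
    have hj0F : j0 ∈ F := jsel_mem hFne
    have hj0A : j0 ∈ Amax S w c := by rw [hAc]; exact hj0F
    have hj0S : j0 ∈ S := hFsubS hj0F
    set y : Fin n' → ℤ := (c j0) • w - (w j0) • c with hy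
    have hyext : ∀ i, y i = c j0 * w i - w j0 * c i := fun i => rfl
    have hyψ : ψ y = 0 := by
      rw [hy, map_sub, map_smul, map_smul, hwψ, (mem_Lsub.mp hcL).1]
      simp
    have hy0 : ∀ i, 0 ≤ y i := by
      intro i
      by_cases hi : i ∈ S
      · have hle := (mem_Amax.mp hj0A).2 i hi
        have hcross := (fQ_le_iff hw hi hj0S).mp hle
        rw [hyext]
        have hc2 : w j0 * c i ≤ c j0 * w i := by
          calc w j0 * c i = c i * w j0 := mul_comm _ _
            _ ≤ c j0 * w i := hcross
        omega
      · rw [hyext, hw.2 i hi, (mem_Lsub.mp hcL).2 i hi]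
        ring_nf
        omega
    have hysupp : ∀ i, y i ≠ 0 ↔ i ∈ S \ F := by
      intro i
      constructor
      · intro hne
        by_cases hi : i ∈ S
        · refine Finset.mem_sdiff.mpr ⟨hi, ?_⟩
          intro hiF
          have hiA : i ∈ Amax S w c := by rw [hAc]; exact hiF
          have e1 := (mem_Amax.mp hiA).2 j0 hj0S
          have e2 := (mem_Amax.mp hj0A).2 i hi
          have heq : fQ w c i = fQ w c j0 := le_antisymm e2 e1
          have hcross := (fQ_eq_iff hw hi hj0S).mp heq
          apply hne
          rw [hyext]
          have : c j0 * w i = w j0 * c i := by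
            calc c j0 * w i = c i * w j0 := by omega
              _ = w j0 * c i := mul_comm _ _
          omega
        · exfalso
          apply hne
          rw [hyext, hw.2 i hi, (mem_Lsub.mp hcL).2 i hi]
          ring
      · intro hmem
        obtain ⟨hiS, hiF⟩ := Finset.mem_sdiff.mp hmem
        have hiA : i ∉ Amax S w c := by rw [hAc]; exact hiF
        have hle := (mem_Amax.mp hj0A).2 i hiS
        have hneq : fQ w c i ≠ fQ w c j0 := by
          intro heq
          apply hiA
          refine mem_Amax.mpr ⟨hiS, fun i' hi' => ?_⟩
          rw [heq]
          exact (mem_Amax.mp hj0A).2 i' hi'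
        have hcross := (fQ_le_iff hw hiS hj0S).mp hle
        have hcrossne : c i * w j0 ≠ c j0 * w i := by
          intro heq
          exact hneq ((fQ_eq_iff hw hiS hj0S).mpr heq)
        rw [hyext]
        have : c i * w j0 < c j0 * w i := lt_of_le_of_ne hcross hcrossne
        have h2 : w j0 * c i < c j0 * w i := by
          calc w j0 * c i = c i * w j0 := mul_comm _ _
            _ < c j0 * w i := this
        omega
    have hycard : (Finset.univ.filter (fun i => y i ≠ 0)).card < S.card := by
      have hset : Finset.univ.filter (fun i => y i ≠ 0) = S \ F := by
        ext i
        simp only [Finset.mem_filter, Finset.mem_univ, true_and]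
        exact hysupp i
      rw [hset]
      exact Finset.card_lt_card (Finset.sdiff_ssubset hFsubS hFne)
    obtain ⟨hu1, hu2, hu3⟩ := mem_Msub.mp hu
    refine IH y u hy0 hyψ hycard hu1 ?_
    intro i hyi
    by_cases hiS : i ∈ S
    · by_cases hiF : i ∈ F
      · exact hu3 i hiF
      · exact absurd hyi (by
          have := (hysupp i).mpr (Finset.mem_sdiff.mpr ⟨hiS, hiF⟩)
          intro hcon
          exact this hcon)
    · exact hu2 i hiS
  have hKle : Ksub ψ S w ≤
      AddSubgroup.toIntSubmodule (AddSubgroup.closure (Gset n' s' ψ)) := by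
    refine iSup₂_le ?_
    intro F hF u hu
    exact hMF F hF u hu
  exact hKle hKmem

theorem main (n s : ℕ) (ψ : (Fin n → ℤ) →ₗ[ℤ] (Fin s → ℤ)) (k : ℕ) :
    ∀ b v : Fin n → ℤ, (∀ i, 0 ≤ b i) → ψ b = 0 →
      (Finset.univ.filter (fun i => b i ≠ 0)).card ≤ k →
      ψ v = 0 → (∀ i, b i = 0 → v i = 0) →
      v ∈ AddSubgroup.closure (Gset n s ψ) := by
  induction k using Nat.strong_induction_on with
  | _ k IH =>
  intro b v hb0 hbψ hbcard hvψ hsupp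
  classical
  set S : Finset (Fin n) := Finset.univ.filter (fun i => b i ≠ 0) with hS
  by_cases hlt : S.card < k
  · exact IH S.card hlt b v hb0 hbψ le_rfl hvψ hsupp
  have hScard : S.card = k := le_antisymm hbcard (not_lt.mp hlt)
  -- the ≥ 1 trick : w = v + N • b has nonneg entries and support ⊆ S
  set N : ℕ := Finset.univ.sup (fun i => (-(v i)).toNat) with hN
  have hbpos : ∀ i ∈ S, 1 ≤ b i := by
    intro i hi
    have h1 : b i ≠ 0 := by simpa [hS] using hi
    have h2 := hb0 i
    omega
  set u : Fin n → ℤ := v + (N : ℤ) • b with hu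
  have huψ : ψ u = 0 := by
    rw [hu, map_add, map_smul, hvψ, hbψ]; simp
  have hu0 : ∀ i, 0 ≤ u i := by
    intro i
    by_cases hi : i ∈ S
    · have h1 : 1 ≤ b i := hbpos i hi
      have h2 : (-(v i)).toNat ≤ N := Finset.le_sup (f := fun i => (-(v i)).toNat) (Finset.mem_univ i)
      have h3 : -(v i) ≤ ((-(v i)).toNat : ℤ) := Int.self_le_toNat _
      have : u i = v i + (N : ℤ) * b i := rfl
      rw [this]
      nlinarith [Int.ofNat_le.mpr h2]
    · have hb : b i = 0 := by simpa [hS] using hi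
      have hv : v i = 0 := hsupp i hb
      simp [hu, hb, hv]
  have husupp : ∀ i, b i = 0 → u i = 0 := by
    intro i hb
    have hv : v i = 0 := hsupp i hb
    simp [hu, hb, hv]
  have hvdecomp : v = u - (N : ℤ) • b := by
    funext i; simp [hu]
  by_cases hsmall : k ≤ 1 + 2 * s
  · -- base case: both u and b are generators
    have hbG : b ∈ Gset n s ψ := ⟨hb0, hbψ, by rw [← hS, hScard]; exact hsmall⟩
    have huG : u ∈ Gset n s ψ := by
      refine ⟨hu0, huψ, ?_⟩
      have hsub : Finset.univ.filter (fun i => u i ≠ 0) ⊆ S := by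
        intro i hi
        simp only [Finset.mem_filter, Finset.mem_univ, true_and] at hi
        rw [hS]
        simp only [Finset.mem_filter, Finset.mem_univ, true_and]
        intro hb
        exact hi (husupp i hb)
      calc (Finset.univ.filter (fun i => u i ≠ 0)).card ≤ S.card := Finset.card_le_card hsub
        _ = k := hScard
        _ ≤ 1 + 2 * s := hsmall
    have h1 := AddSubgroup.subset_closure (k := Gset n s ψ) huG
    have h2 := AddSubgroup.subset_closure (k := Gset n s ψ) hbG
    rw [hvdecomp]
    exact AddSubgroup.sub_mem _ h1 (AddSubgroup.zsmul_mem _ h2 _)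
  · -- inductive case, k ≥ 2s+2 : use the core step
    have hk2 : 2 * s + 2 ≤ S.card := by omega
    have IH' : ∀ b' v' : Fin n → ℤ, (∀ i, 0 ≤ b' i) → ψ b' = 0 →
        (Finset.univ.filter (fun i => b' i ≠ 0)).card < S.card →
        ψ v' = 0 → (∀ i, b' i = 0 → v' i = 0) →
        v' ∈ AddSubgroup.closure (Gset n s ψ) := by
      intro b' v' h1 h2 h3 h4 h5
      exact IH _ (by omega) b' v' h1 h2 le_rfl h4 h5
    have hbS : ∀ i, i ∈ S ↔ b i ≠ 0 := by
      intro i; simp [hS]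
    have hbG : b ∈ AddSubgroup.closure (Gset n s ψ) :=
      core_step n s ψ S hk2 IH' b hb0 hbψ hbS
    have huG : u ∈ AddSubgroup.closure (Gset n s ψ) := by
      set Su : Finset (Fin n) := Finset.univ.filter (fun i => u i ≠ 0) with hSu
      have hsub : Su ⊆ S := by
        intro i hi
        simp only [hSu, Finset.mem_filter, Finset.mem_univ, true_and] at hi
        rw [hS]; simp only [Finset.mem_filter, Finset.mem_univ, true_and]
        intro hb; exact hi (husupp i hb)
      by_cases heq : Su = S
      · refine core_step n s ψ S hk2 IH' u hu0 huψ ?_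
        intro i
        rw [← heq, hSu]
        simp
      · have hlt2 : Su.card < S.card := Finset.card_lt_card (lt_of_le_of_ne hsub heq)
        exact IH' u u hu0 huψ hlt2 huψ (fun i h => h)
    rw [hvdecomp]
    exact AddSubgroup.sub_mem _ huG (AddSubgroup.zsmul_mem _ hbG _)



end DCproof

theorem differenceClosed_torsionFree_subset_closure_small_support
    (n s : ℕ) (B : AddSubmonoid (Fin n → ℕ))
    (ι : (Fin n → ℕ) → (Fin n → ℤ)) (hι : ι = fun m i => (m i : ℤ))
    (ZB : AddSubgroup (Fin n → ℤ))
    (hZB : ZB = AddSubgroup.closure (ι '' (B : Set (Fin n → ℕ))))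
    (hdc : ι '' (B : Set (Fin n → ℕ)) = ↑ZB ∩ {v | ∀ i, 0 ≤ v i})
    (htf : ∀ x : (Fin n → ℤ) ⧸ ZB, ∀ k : ℤ, k ≠ 0 → k • x = 0 → x = 0)
    (hs : s = Module.finrank ℤ ((Fin n → ℤ) ⧸ ZB)) :
    ∀ b ∈ B, ι b ∈ AddSubgroup.closure
      (ι '' {m : Fin n → ℕ | m ∈ B ∧
        (Finset.univ.filter (fun i => m i ≠ 0)).card ≤ 1 + 2 * s}) := by
  intro b hb
  classical
  -- set up the quotient as a finite free ℤ-module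
  letI : Module ℤ ((Fin n → ℤ) ⧸ ZB) := inferInstance
  have hsurj : Function.Surjective (QuotientAddGroup.mk' ZB).toIntLinearMap :=
    QuotientAddGroup.mk'_surjective ZB
  haveI : Module.Finite ℤ ((Fin n → ℤ) ⧸ ZB) :=
    Module.Finite.of_surjective (QuotientAddGroup.mk' ZB).toIntLinearMap hsurj
  haveI : NoZeroSMulDivisors ℤ ((Fin n → ℤ) ⧸ ZB) := by
    constructor
    intro c x h
    by_cases hc : c = 0
    · exact Or.inl hc
    · exact Or.inr (htf x c hc h)
  haveI : Module.Free ℤ ((Fin n → ℤ) ⧸ ZB) := inferInstance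
  let bQ := Module.Free.chooseBasis ℤ ((Fin n → ℤ) ⧸ ZB)
  have hcard : Fintype.card (Module.Free.ChooseBasisIndex ℤ ((Fin n → ℤ) ⧸ ZB)) = s := by
    rw [← Module.finrank_eq_card_chooseBasisIndex, ← hs]
  let eIdx : Fin s ≃ Module.Free.ChooseBasisIndex ℤ ((Fin n → ℤ) ⧸ ZB) :=
    (Fintype.equivFinOfCardEq hcard).symm
  let ρ : (Module.Free.ChooseBasisIndex ℤ ((Fin n → ℤ) ⧸ ZB) → ℤ) ≃ₗ[ℤ] (Fin s → ℤ) :=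
    LinearEquiv.funCongrLeft ℤ ℤ eIdx
  let ψ : (Fin n → ℤ) →ₗ[ℤ] (Fin s → ℤ) :=
    ρ.toLinearMap ∘ₗ bQ.equivFun.toLinearMap ∘ₗ (QuotientAddGroup.mk' ZB).toIntLinearMap
  have hker : ∀ x : Fin n → ℤ, ψ x = 0 ↔ x ∈ ZB := by
    intro x
    have h1 : ψ x = ρ (bQ.equivFun ((QuotientAddGroup.mk' ZB) x)) := rfl
    rw [h1, LinearEquiv.map_eq_zero_iff, LinearEquiv.map_eq_zero_iff,
      QuotientAddGroup.mk'_apply, QuotientAddGroup.eq_zero_iff]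
  -- identify the generating sets
  have hsets : ι '' {m : Fin n → ℕ | m ∈ B ∧
        (Finset.univ.filter (fun i => m i ≠ 0)).card ≤ 1 + 2 * s} = DCproof.Gset n s ψ := by
    ext u
    constructor
    · rintro ⟨m, ⟨hmB, hmcard⟩, rfl⟩
      have hmem : ι m ∈ (↑ZB ∩ {v : Fin n → ℤ | ∀ i, 0 ≤ v i}) := by
        rw [← hdc]; exact Set.mem_image_of_mem ι hmB
      refine ⟨hmem.2, (hker _).mpr hmem.1, ?_⟩
      have : (Finset.univ.filter (fun i => ι m i ≠ 0)) =
          (Finset.univ.filter (fun i => m i ≠ 0)) := by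
        apply Finset.filter_congr
        intro i _
        simp [hι]
      rw [this]; exact hmcard
    · rintro ⟨hpos, hψ, hcard2⟩
      have : u ∈ ι '' (B : Set (Fin n → ℕ)) := by
        rw [hdc]; exact ⟨(hker u).mp hψ, hpos⟩
      obtain ⟨m, hmB, rfl⟩ := this
      refine ⟨m, ⟨hmB, ?_⟩, rfl⟩
      have : (Finset.univ.filter (fun i => ι m i ≠ 0)) =
          (Finset.univ.filter (fun i => m i ≠ 0)) := by
        apply Finset.filter_congr
        intro i _
        simp [hι]
      rw [← this]; exact hcard2
  rw [hsets]
  have hbmem : ι b ∈ (↑ZB ∩ {v : Fin n → ℤ | ∀ i, 0 ≤ v i}) := by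
    rw [← hdc]; exact Set.mem_image_of_mem ι hb
  exact DCproof.main n s ψ ((Finset.univ.filter (fun i => ι b i ≠ 0)).card)
    (ι b) (ι b) hbmem.2 ((hker _).mpr hbmem.1) le_rfl ((hker _).mpr hbmem.1)
    (fun i h => h)
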